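/- Let s₀ = σ₀ + it₀ with σ₀ > 1. Then the limit γ₂(s₀) = lim_{N→∞} ∑_{m≥1} m^{-s₀} ( ∑_{n=1}^N 1/(m+n) - log(m+N) ) exists. -/

import Mathlib

open Filter Real

/-- The partial complex sum equals a difference of harmonic numbers. -/
lemma stmt13_sum_eq (m N : ℕ) :
    ∑ n ∈ Finset.Icc 1 N, (1 : ℂ) / ((m + 1 + n : ℕ) : ℂ)
      = ((harmonic (m + 1 + N) : ℂ) - (harmonic (m + 1) : ℂ)) := by
  induction N with
  | zero => simp
  | succ N ih =>
      rw [Finset.sum_Icc_succ_top (by omega : 1 ≤ N + 1), ih,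
        show m + 1 + (N + 1) = (m + 1 + N) + 1 from rfl, harmonic_succ (m + 1 + N)]
      push_cast
      ring

/-- For `1 ≤ K`, `0 < harmonic K - log K ≤ 1`. -/
lemma stmt13_harm_bounds {K : ℕ} (hK : 1 ≤ K) :
    0 < (harmonic K : ℝ) - Real.log K ∧ (harmonic K : ℝ) - Real.log K ≤ 1 := by
  have hne : K ≠ 0 := by omega
  have h1 : (harmonic K : ℝ) - Real.log K = Real.eulerMascheroniSeq' K := by
    simp [Real.eulerMascheroniSeq', hne]
  constructor
  · rw [h1]
    have := Real.eulerMascheroniSeq_lt_eulerMascheroniSeq' 0 K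
    simpa [Real.eulerMascheroniSeq_zero] using this
  · rw [h1]
    have := Real.strictAnti_eulerMascheroniSeq'.antitone hK
    simpa [Real.eulerMascheroniSeq'_one] using this

theorem stmt13 (s₀ : ℂ) (h : 1 < s₀.re) :
    ∃ L : ℂ, Filter.Tendsto (fun N : ℕ =>
      ∑' m : ℕ, ((m + 1 : ℕ) : ℂ) ^ (-s₀) *
        ((∑ n ∈ Finset.Icc 1 N, (1 : ℂ) / ((m + 1 + n : ℕ) : ℂ))
          - Complex.log ((m + 1 + N : ℕ) : ℂ)))
      Filter.atTop (nhds L) := by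
  set σ := s₀.re with hσdef
  have hσ : 1 < σ := h
  -- the summand as a complex multiple of a real number
  set f : ℕ → ℕ → ℂ := fun N m => ((m + 1 : ℕ) : ℂ) ^ (-s₀) *
      ((((harmonic (m + 1 + N) : ℝ) - (harmonic (m + 1) : ℝ)
        - Real.log ((m + 1 + N : ℕ) : ℝ) : ℝ)) : ℂ) with hf
  have hfeq : ∀ N m, ((m + 1 : ℕ) : ℂ) ^ (-s₀) *
        ((∑ n ∈ Finset.Icc 1 N, (1 : ℂ) / ((m + 1 + n : ℕ) : ℂ))
          - Complex.log ((m + 1 + N : ℕ) : ℂ)) = f N m := by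
    intro N m
    rw [hf, stmt13_sum_eq, ← Complex.natCast_log]
    push_cast
    ring
  -- the limit function
  set g : ℕ → ℂ := fun m => ((m + 1 : ℕ) : ℂ) ^ (-s₀) *
      (((Real.eulerMascheroniConstant - (harmonic (m + 1) : ℝ) : ℝ)) : ℂ) with hg
  -- the bound
  set bound : ℕ → ℝ := fun m =>
      ((m + 1 : ℕ) : ℝ) ^ (-σ) * (2 + Real.log ((m + 1 : ℕ) : ℝ)) with hbound
  have hpos : ∀ m : ℕ, (0 : ℝ) < ((m + 1 : ℕ) : ℝ) := fun m => by positivity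
  have hnorm : ∀ m : ℕ, ‖((m + 1 : ℕ) : ℂ) ^ (-s₀)‖ = ((m + 1 : ℕ) : ℝ) ^ (-σ) := by
    intro m
    rw [show ((m + 1 : ℕ) : ℂ) = ((((m + 1 : ℕ) : ℝ)) : ℂ) by push_cast; ring]
    rw [Complex.norm_cpow_eq_rpow_re_of_pos (hpos m)]
    simp [hσdef]
  -- summability of the bound
  have hsum : Summable bound := by
    set ε : ℝ := (σ - 1) / 2 with hε
    have hε0 : 0 < ε := by simp only [hε]; linarith
    have hp : ε - σ < -1 := by simp only [hε]; linarith
    have hs : Summable (fun m : ℕ => (2 + ε⁻¹) * ((m + 1 : ℕ) : ℝ) ^ (ε - σ)) := by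
      apply Summable.mul_left
      have : Summable (fun n : ℕ => ((n : ℝ)) ^ (ε - σ)) := Real.summable_nat_rpow.2 hp
      have := (summable_nat_add_iff 1).2 this
      simpa using this
    apply Summable.of_nonneg_of_le _ _ hs
    · intro m
      have : 0 ≤ Real.log ((m + 1 : ℕ) : ℝ) := Real.log_nonneg (by exact_mod_cast Nat.le_add_left 1 m)
      positivity
    · intro m
      have h1 : (1 : ℝ) ≤ ((m + 1 : ℕ) : ℝ) ^ ε :=
        Real.one_le_rpow (by exact_mod_cast Nat.le_add_left 1 m) hε0.le
      have hlog : Real.log ((m + 1 : ℕ) : ℝ) ≤ ((m + 1 : ℕ) : ℝ) ^ ε / ε :=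
        Real.log_le_rpow_div (hpos m).le hε0
      have h2 : 2 + Real.log ((m + 1 : ℕ) : ℝ) ≤ (2 + ε⁻¹) * ((m + 1 : ℕ) : ℝ) ^ ε := by
        have : ((m + 1 : ℕ) : ℝ) ^ ε / ε = ε⁻¹ * ((m + 1 : ℕ) : ℝ) ^ ε := by
          field_simp
        nlinarith [h1, hlog, inv_nonneg.2 hε0.le, this]
      calc bound m ≤ ((m + 1 : ℕ) : ℝ) ^ (-σ) * ((2 + ε⁻¹) * ((m + 1 : ℕ) : ℝ) ^ ε) := by
            apply mul_le_mul_of_nonneg_left h2 (Real.rpow_nonneg (hpos m).le _)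
        _ = (2 + ε⁻¹) * ((m + 1 : ℕ) : ℝ) ^ (ε - σ) := by
            rw [show ε - σ = -σ + ε by ring, Real.rpow_add (hpos m)]; ring
  -- pointwise convergence
  have hptwise : ∀ m : ℕ, Tendsto (fun N => f N m) atTop (nhds (g m)) := by
    intro m
    rw [hf, hg]
    apply Tendsto.const_mul
    have key : Tendsto (fun N : ℕ => ((harmonic (m + 1 + N) : ℝ)
        - Real.log ((m + 1 + N : ℕ) : ℝ))) atTop (nhds Real.eulerMascheroniConstant) := by
      have := Real.tendsto_harmonic_sub_log.comp
        (tendsto_add_atTop_nat (m + 1))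
      apply this.congr
      intro N
      simp only [Function.comp]
      rw [show N + (m + 1) = m + 1 + N by omega]
    have : Tendsto (fun N : ℕ => ((harmonic (m + 1 + N) : ℝ)
        - Real.log ((m + 1 + N : ℕ) : ℝ) - (harmonic (m + 1) : ℝ))) atTop
        (nhds (Real.eulerMascheroniConstant - (harmonic (m + 1) : ℝ))) :=
      key.sub_const _
    have := (Complex.continuous_ofReal.tendsto _).comp this
    apply this.congr
    intro N
    simp only [Function.comp]
    push_cast
    ring
  -- uniform bound
  have hb : ∀ N m, ‖f N m‖ ≤ bound m := by
    intro N m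
    rw [hf]
    simp only
    rw [norm_mul, hnorm, Complex.norm_real, hbound]
    apply mul_le_mul_of_nonneg_left _ (Real.rpow_nonneg (hpos m).le _)
    have hK1 : 1 ≤ m + 1 + N := by omega
    obtain ⟨hl, hu⟩ := stmt13_harm_bounds hK1
    obtain ⟨hl', hu'⟩ := stmt13_harm_bounds (show 1 ≤ m + 1 by omega)
    have hh0 : (0 : ℝ) ≤ (harmonic (m + 1) : ℝ) := by
      exact_mod_cast (harmonic_pos (by omega : m + 1 ≠ 0)).le
    have hlog0 : 0 ≤ Real.log ((m + 1 : ℕ) : ℝ) :=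
      Real.log_nonneg (by exact_mod_cast Nat.le_add_left 1 m)
    rw [Real.norm_eq_abs, abs_le]
    constructor
    · have : (harmonic (m + 1) : ℝ) ≤ 1 + Real.log ((m + 1 : ℕ) : ℝ) := by linarith
      linarith
    · linarith
  -- conclude
  refine ⟨∑' m, g m, ?_⟩
  have := tendsto_tsum_of_dominated_convergence hsum hptwise (Eventually.of_forall hb)
  apply this.congr
  intro N
  exact tsum_congr fun m => (hfeq N m).symm
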